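/- arXiv:1704.02519 — 2 statements merged into one kernel-verified Lean document; each statement's English description precedes it below -/
import Mathlib

section
/- Let $C \in \mathbb{R}^{p\times p}$ be lower triangular with strictly positive diagonal entries, and let $C' = C P$ for a signed permutation matrix $P$. If $C'$ is also lower triangular with strictly positive diagonal entries, then $P = I$ and hence $C' = C$. -/
/-- A signed permutation matrix: each column has exactly one nonzero entry, equal to `1` or `-1`,
with the nonzero rows given by a permutation. -/
def IsSignedPermMatrix {p : ℕ} (P : Matrix (Fin p) (Fin p) ℝ) : Prop :=
  ∃ (σ : Equiv.Perm (Fin p)) (d : Fin p → ℝ), (∀ j, d j = 1 ∨ d j = -1) ∧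
    ∀ i j, P i j = if i = σ j then d j else 0

theorem lower_triangular_pos_diag_unique (p : ℕ)
    (C C' P : Matrix (Fin p) (Fin p) ℝ)
    (hCtri : ∀ i j : Fin p, i < j → C i j = 0) (hCdiag : ∀ j, 0 < C j j)
    (hP : IsSignedPermMatrix P) (hC' : C' = C * P)
    (hC'tri : ∀ i j : Fin p, i < j → C' i j = 0) (hC'diag : ∀ j, 0 < C' j j) :
    P = 1 ∧ C' = C := by
  obtain ⟨σ, d, hd, hPeq⟩ := hP
  have hC'app : ∀ i j, C' i j = C i (σ j) * d j := by
    intro i j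
    simp [hC', Matrix.mul_apply, hPeq, mul_ite, mul_zero]
  -- σ j ≤ j for all j
  have hle : ∀ j, (σ j : ℕ) ≤ (j : ℕ) := by
    intro j
    by_contra h
    push_neg at h
    have hz : C j (σ j) = 0 := hCtri j (σ j) h
    have := hC'diag j
    rw [hC'app j j, hz, zero_mul] at this
    exact lt_irrefl _ this
  -- σ = id by strong induction
  have hid : ∀ n : ℕ, ∀ j : Fin p, (j : ℕ) = n → σ j = j := by
    intro n
    induction n using Nat.strong_induction_on with
    | _ n ih =>
      intro j hj
      rcases lt_or_eq_of_le (hle j) with hlt | heq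
      · exfalso
        have hk : σ (σ j) = σ j := ih (σ j) (hj ▸ hlt) (σ j) rfl
        have : σ j = j := σ.injective hk
        rw [this] at hlt
        exact lt_irrefl _ hlt
      · exact Fin.ext heq
  have hσ : ∀ j, σ j = j := fun j => hid j j rfl
  -- d j = 1
  have hd1 : ∀ j, d j = 1 := by
    intro j
    rcases hd j with h | h
    · exact h
    · exfalso
      have := hC'diag j
      rw [hC'app j j, hσ j, h] at this
      have := hCdiag j
      nlinarith [hC'diag j, hC'app j j]
  have hP1 : P = 1 := by
    ext i j
    rw [hPeq i j, hσ j, hd1 j, Matrix.one_apply]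
  exact ⟨hP1, by rw [hC', hP1, Matrix.mul_one]⟩
end

section
/- Let $A, A', C \in \mathbb{R}^{p\times p}$ with $C$ lower triangular, and let $D$ be diagonal with entries in $\{1,-1\}$ satisfying $A' C = A C D$. Fix $j$ and suppose $A'_{:i} = A_{:i}$ for all $i > j$, $C_{jj} \neq 0$, and there exists a row $l$ with $C_{jj} A_{lj} + \sum_{i>j} C_{ij} A_{li} \neq 0$ and $A'_{lj} = A_{lj}$. Then $D_{jj} = 1$ and $A'_{:j} = A_{:j}$. -/
theorem column_sign_inductive_step (p : ℕ)
    (A A' C : Matrix (Fin p) (Fin p) ℝ)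
    (hCtri : ∀ i j : Fin p, i < j → C i j = 0)
    (d : Fin p → ℝ) (hd : ∀ i, d i = 1 ∨ d i = -1)
    (h : A' * C = A * C * Matrix.diagonal d)
    (j : Fin p)
    (hcols : ∀ i : Fin p, j < i → ∀ l, A' l i = A l i)
    (hCjj : C j j ≠ 0)
    (l : Fin p)
    (hl : C j j * A l j + ∑ i ∈ Finset.univ.filter (fun i => j < i), C i j * A l i ≠ 0)
    (hlj : A' l j = A l j) :
    d j = 1 ∧ ∀ l', A' l' j = A l' j := by
  have hsum : ∀ (B : Matrix (Fin p) (Fin p) ℝ) (l' : Fin p),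
      ∑ i, B l' i * C i j
        = B l' j * C j j + ∑ i ∈ Finset.univ.filter (fun i => j < i), B l' i * C i j := by
    intro B l'
    rw [← Finset.sum_filter_add_sum_filter_not Finset.univ (fun i => j < i)]
    have h2 : ∑ i ∈ Finset.univ.filter (fun i => ¬ j < i), B l' i * C i j
        = B l' j * C j j := by
      apply Finset.sum_eq_single_of_mem
      · simp
      · intro i hi hne
        simp only [Finset.mem_filter, not_lt] at hi
        have : i < j := lt_of_le_of_ne hi.2 hne
        rw [hCtri i j this, mul_zero]
    rw [h2]; ring
  have key : ∀ l' : Fin p,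
      A' l' j * C j j + ∑ i ∈ Finset.univ.filter (fun i => j < i), A' l' i * C i j
        = (A l' j * C j j + ∑ i ∈ Finset.univ.filter (fun i => j < i), A l' i * C i j) * d j := by
    intro l'
    have := congrFun (congrFun h l') j
    rw [Matrix.mul_diagonal] at this
    simp only [Matrix.mul_apply] at this
    rw [hsum A' l', hsum A l'] at this
    exact this
  have hrw : ∀ l' : Fin p,
      ∑ i ∈ Finset.univ.filter (fun i => j < i), A' l' i * C i j
        = ∑ i ∈ Finset.univ.filter (fun i => j < i), A l' i * C i j := by
    intro l'
    apply Finset.sum_congr rfl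
    intro i hi
    simp only [Finset.mem_filter] at hi
    rw [hcols i hi.2 l']
  have hne : A l j * C j j + ∑ i ∈ Finset.univ.filter (fun i => j < i), A l i * C i j ≠ 0 := by
    have : A l j * C j j + ∑ i ∈ Finset.univ.filter (fun i => j < i), A l i * C i j
        = C j j * A l j + ∑ i ∈ Finset.univ.filter (fun i => j < i), C i j * A l i := by
      rw [mul_comm]
      congr 1
      exact Finset.sum_congr rfl (fun i _ => mul_comm _ _)
    rw [this]; exact hl
  have hkeyl := key l
  rw [hrw l, hlj] at hkeyl
  have hdj : d j = 1 := by
    have : (A l j * C j j + ∑ i ∈ Finset.univ.filter (fun i => j < i), A l i * C i j) * 1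
        = (A l j * C j j + ∑ i ∈ Finset.univ.filter (fun i => j < i), A l i * C i j) * d j := by
      rw [mul_one]; exact hkeyl
    exact (mul_left_cancel₀ hne this.symm)
  refine ⟨hdj, fun l' => ?_⟩
  have hk := key l'
  rw [hrw l', hdj, mul_one] at hk
  have : A' l' j * C j j = A l' j * C j j := by linarith
  exact mul_right_cancel₀ hCjj this
end
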